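/- arXiv:2409.09347 — 2 statements merged into one kernel-verified Lean document; each statement's English description precedes it below -/
import Mathlib

section
/- Fix s ∈ (0,1), let α, γ : (0,1) → ℝ be differentiable with α(t) ≠ 0 for all t, set c = γ(s)²/α(s)², and let t ∈ (0,1) satisfy γ(t)² − α(t)²·c > 0. Define γ_{t,s} = √(γ(t)² − α(t)²·c). Then 2·γ_{t,s}·(d/dt)γ_{t,s} − 2·γ_{t,s}²·α′(t)/α(t) = 2·γ(t)·γ′(t) − 2·γ(t)²·α′(t)/α(t). In other words, the optimal squared diffusion coefficient (ε*_t)² = 2γ_{t,s}·γ̇_{t,s} − 2γ_{t,s}²·α̇_t/α_t of the interpolation started from an intermediate time s does not depend on s and equals 2γ_t γ̇_t − 2γ_t² α̇_t/α_t. -/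
/-- The optimal squared diffusion coefficient
`2 γ_{t,s} γ̇_{t,s} − 2 γ_{t,s}² α̇_t/α_t`, with
`γ_{t,s} = √(γ(t)² − α(t)² γ(s)²/α(s)²)`, does not depend on `s` and equals
`2 γ_t γ̇_t − 2 γ_t² α̇_t/α_t`. -/
theorem stmt7 (α γ α' γ' : ℝ → ℝ)
    (hα : ∀ t ∈ Set.Ioo (0 : ℝ) 1, HasDerivAt α (α' t) t)
    (hγ : ∀ t ∈ Set.Ioo (0 : ℝ) 1, HasDerivAt γ (γ' t) t)
    (hα0 : ∀ t ∈ Set.Ioo (0 : ℝ) 1, α t ≠ 0)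
    (s : ℝ) (hs : s ∈ Set.Ioo (0 : ℝ) 1)
    (t : ℝ) (ht : t ∈ Set.Ioo (0 : ℝ) 1)
    (hpos : 0 < γ t ^ 2 - α t ^ 2 * (γ s ^ 2 / α s ^ 2)) :
    2 * Real.sqrt (γ t ^ 2 - α t ^ 2 * (γ s ^ 2 / α s ^ 2)) *
        deriv (fun u => Real.sqrt (γ u ^ 2 - α u ^ 2 * (γ s ^ 2 / α s ^ 2))) t -
      2 * (γ t ^ 2 - α t ^ 2 * (γ s ^ 2 / α s ^ 2)) * α' t / α t =
    2 * γ t * γ' t - 2 * γ t ^ 2 * α' t / α t := by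
  set c : ℝ := γ s ^ 2 / α s ^ 2 with hc
  have hf : HasDerivAt (fun u => γ u ^ 2 - α u ^ 2 * c)
      (2 * γ t * γ' t - 2 * α t * α' t * c) t := by
    have h1 : HasDerivAt (fun u => γ u ^ 2) (2 * γ t * γ' t) t := by
      have : HasDerivAt (fun u => γ u * γ u) (γ' t * γ t + γ t * γ' t) t := (hγ t ht).mul (hγ t ht)
      simp only [pow_two]; convert this using 1; ring
    have h2 : HasDerivAt (fun u => α u ^ 2 * c) (2 * α t * α' t * c) t := by
      have : HasDerivAt (fun u => α u * α u * c) ((α' t * α t + α t * α' t) * c) t := ((hα t ht).mul (hα t ht)).mul_const c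
      simp only [pow_two]; convert this using 1; ring
    exact h1.sub h2
  have hne : γ t ^ 2 - α t ^ 2 * c ≠ 0 := ne_of_gt hpos
  have hsq : HasDerivAt (fun u => Real.sqrt (γ u ^ 2 - α u ^ 2 * c))
      ((2 * γ t * γ' t - 2 * α t * α' t * c) / (2 * Real.sqrt (γ t ^ 2 - α t ^ 2 * c))) t :=
    hf.sqrt hne
  rw [hsq.deriv]
  have hsqrt : Real.sqrt (γ t ^ 2 - α t ^ 2 * c) ≠ 0 :=
    Real.sqrt_ne_zero'.2 hpos
  have hαt := hα0 t ht
  field_simp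
  ring
end

section
/- Let E be a standard Borel space, let μ and ν be probability measures on E × ℝ^d with ∫‖y‖ dμ(x,y) < ∞ and ∫‖y‖ dν(x,y) < ∞, let a ∈ (0,1), and set κ = (1−a)·μ + a·ν. Then for κ.fst-almost every x ∈ E, writing w(x) = a·(dν.fst/dκ.fst)(x), the conditional means satisfy ∫ y d(κ.condKernel(x))(y) = (1 − w(x))·∫ y d(μ.condKernel(x))(y) + w(x)·∫ y d(ν.condKernel(x))(y). In the paper's notation: E_{(1−a)μ + aν}[X₁ | X_t = x] = (1 − δ̄(x))·E_μ[X₁ | X_t = x] + δ̄(x)·E_ν[X₁ | X_t = x] with δ̄(x) = a·(dν_t/dκ_t)(x). -/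
open MeasureTheory ProbabilityTheory
open scoped ENNReal NNReal

section aux

variable {X Y : Type*} [MeasurableSpace X] [MeasurableSpace Y]

lemma nnreal_smul_eq_ennreal_smul (c : ℝ≥0) (m : Measure X) :
    c • m = (c : ℝ≥0∞) • m := by
  ext s hs
  simp only [Measure.smul_apply, ENNReal.smul_def, smul_eq_mul]

lemma fst_smul_ennreal (c : ℝ≥0∞) (ρ : Measure (X × Y)) :
    (c • ρ).fst = c • ρ.fst := by
  simp [Measure.fst, Measure.map_smul]

end aux

/-- Conditional means of a mixture: with `κ = (1−a)μ + aν` on `E × ℝ^d` and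
`w(x) = a·(dν.fst/dκ.fst)(x)`, for `κ.fst`-a.e. `x`, the conditional mean of
the second coordinate under `κ` is the `w(x)`-mixture of the conditional
means under `μ` and `ν`. -/
theorem stmt12 {E : Type*} [MeasurableSpace E] [StandardBorelSpace E] (d : ℕ)
    (μ ν : Measure (E × EuclideanSpace ℝ (Fin d)))
    [IsProbabilityMeasure μ] [IsProbabilityMeasure ν]
    (hμint : Integrable (fun p => ‖p.2‖) μ)
    (hνint : Integrable (fun p => ‖p.2‖) ν)
    (a : ℝ) (ha : a ∈ Set.Ioo (0 : ℝ) 1) :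
    ∀ᵐ x ∂((1 - a).toNNReal • μ + a.toNNReal • ν).fst,
      ∫ y, y ∂(((1 - a).toNNReal • μ + a.toNNReal • ν).condKernel x) =
        (1 - a * (ν.fst.rnDeriv ((1 - a).toNNReal • μ + a.toNNReal • ν).fst x).toReal) •
            ∫ y, y ∂(μ.condKernel x) +
          (a * (ν.fst.rnDeriv ((1 - a).toNNReal • μ + a.toNNReal • ν).fst x).toReal) •
            ∫ y, y ∂(ν.condKernel x) := by
  obtain ⟨ha0, ha1⟩ := ha
  set Ω := EuclideanSpace ℝ (Fin d) with hΩ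
  set c₁ : ℝ≥0∞ := ((1 - a).toNNReal : ℝ≥0∞) with hc₁
  set c₂ : ℝ≥0∞ := ((a).toNNReal : ℝ≥0∞) with hc₂
  have hc₁top : c₁ ≠ ∞ := ENNReal.coe_ne_top
  have hc₂top : c₂ ≠ ∞ := ENNReal.coe_ne_top
  have hc₂0 : c₂ ≠ 0 := by
    simp [hc₂, Real.toNNReal_eq_zero, not_le, ha0]
  have hc₂toReal : c₂.toReal = a := by
    simp [hc₂, Real.coe_toNNReal _ ha0.le]
  set κ : Measure (E × Ω) := (1 - a).toNNReal • μ + a.toNNReal • ν with hκ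
  have hκeq : κ = c₁ • μ + c₂ • ν := by
    rw [hκ, nnreal_smul_eq_ennreal_smul, nnreal_smul_eq_ennreal_smul]
  have : IsFiniteMeasure κ := by
    constructor
    rw [hκeq]
    simp only [Measure.add_apply, Measure.smul_apply, smul_eq_mul, measure_univ, mul_one]
    exact ENNReal.add_lt_top.mpr ⟨hc₁top.lt_top, hc₂top.lt_top⟩
  have hκfst : κ.fst = c₁ • μ.fst + c₂ • ν.fst := by
    rw [hκeq, Measure.fst_add, fst_smul_ennreal, fst_smul_ennreal]
  -- absolute continuity of the marginals
  have hμac : μ.fst ≪ κ.fst := by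
    refine Measure.AbsolutelyContinuous.mk fun s hs h0 => ?_
    rw [hκfst] at h0
    simp only [Measure.add_apply, Measure.smul_apply, smul_eq_mul, add_eq_zero,
      mul_eq_zero] at h0
    have hc₁0 : c₁ ≠ 0 := by
      simp [hc₁, Real.toNNReal_eq_zero, not_le, sub_pos, ha1]
    rcases h0.1 with h | h
    · exact absurd h hc₁0
    · exact h
  have hνac : ν.fst ≪ κ.fst := by
    refine Measure.AbsolutelyContinuous.mk fun s hs h0 => ?_
    rw [hκfst] at h0
    simp only [Measure.add_apply, Measure.smul_apply, smul_eq_mul, add_eq_zero,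
      mul_eq_zero] at h0
    rcases h0.2 with h | h
    · exact absurd h hc₂0
    · exact h
  -- densities
  set f : E → ℝ≥0∞ := fun x => c₁ * μ.fst.rnDeriv κ.fst x with hf
  set g : E → ℝ≥0∞ := fun x => c₂ * ν.fst.rnDeriv κ.fst x with hg
  have hfmeas : Measurable f := (Measure.measurable_rnDeriv _ _).const_mul _
  have hgmeas : Measurable g := (Measure.measurable_rnDeriv _ _).const_mul _
  have hwdf : κ.fst.withDensity f = c₁ • μ.fst := by
    have : f = c₁ • (μ.fst.rnDeriv κ.fst) := rfl
    rw [this, withDensity_smul _ (Measure.measurable_rnDeriv _ _),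
      Measure.withDensity_rnDeriv_eq _ _ hμac]
  have hwdg : κ.fst.withDensity g = c₂ • ν.fst := by
    have : g = c₂ • (ν.fst.rnDeriv κ.fst) := rfl
    rw [this, withDensity_smul _ (Measure.measurable_rnDeriv _ _),
      Measure.withDensity_rnDeriv_eq _ _ hνac]
  have hwdsum : κ.fst.withDensity (f + g) = κ.fst := by
    rw [withDensity_add_right _ hgmeas, hwdf, hwdg, ← hκfst]
  -- a.e. f + g = 1
  have hae_sum : ∀ᵐ x ∂κ.fst, f x + g x = 1 := by
    have h1 : (κ.fst.withDensity (f + g)).rnDeriv κ.fst =ᵐ[κ.fst] (f + g) :=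
      Measure.rnDeriv_withDensity _ (hfmeas.add hgmeas)
    rw [hwdsum] at h1
    filter_upwards [h1, Measure.rnDeriv_self κ.fst] with x h1 h2
    simpa using h1.symm.trans h2
  -- the candidate disintegration kernel
  set fb : E → ℝ≥0∞ := fun x => min (f x) 1 with hfb
  set gb : E → ℝ≥0∞ := fun x => min (g x) 1 with hgb
  have hfbmeas : Measurable fb := hfmeas.min measurable_const
  have hgbmeas : Measurable gb := hgmeas.min measurable_const
  have hfb_ae : fb =ᵐ[κ.fst] f := by
    filter_upwards [hae_sum] with x hx
    have : f x ≤ 1 := le_of_le_of_eq (le_add_right le_rfl) hx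
    simp [hfb, min_eq_left this]
  have hgb_ae : gb =ᵐ[κ.fst] g := by
    filter_upwards [hae_sum] with x hx
    have : g x ≤ 1 := le_of_le_of_eq (le_add_left le_rfl) hx
    simp [hgb, min_eq_left this]
  have hufb : Measurable (Function.uncurry fun x (_ : Ω) => fb x) :=
    hfbmeas.comp measurable_fst
  have hugb : Measurable (Function.uncurry fun x (_ : Ω) => gb x) :=
    hgbmeas.comp measurable_fst
  set η₁ : Kernel E Ω := Kernel.withDensity μ.condKernel (fun x _ => fb x) with hη₁
  set η₂ : Kernel E Ω := Kernel.withDensity ν.condKernel (fun x _ => gb x) with hη₂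
  have hη₁fin : IsFiniteKernel η₁ :=
    Kernel.isFiniteKernel_withDensity_of_bounded _ (B := 1) ENNReal.one_ne_top
      fun x _ => min_le_right _ _
  have hη₂fin : IsFiniteKernel η₂ :=
    Kernel.isFiniteKernel_withDensity_of_bounded _ (B := 1) ENNReal.one_ne_top
      fun x _ => min_le_right _ _
  set η : Kernel E Ω := η₁ + η₂ with hη
  have hη₁x : ∀ x, η₁ x = fb x • μ.condKernel x := by
    intro x
    rw [hη₁, Kernel.withDensity_apply _ hufb, withDensity_const]
  have hη₂x : ∀ x, η₂ x = gb x • ν.condKernel x := by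
    intro x
    rw [hη₂, Kernel.withDensity_apply _ hugb, withDensity_const]
  -- the compProd identity
  have hcomp₁ : κ.fst ⊗ₘ η₁ = c₁ • μ := by
    ext s hs
    rw [Measure.compProd_apply hs]
    have hcalc : ∀ x, η₁ x (Prod.mk x ⁻¹' s) = fb x * μ.condKernel x (Prod.mk x ⁻¹' s) := by
      intro x; rw [hη₁x x]; simp [Measure.smul_apply, ENNReal.smul_def]
    simp_rw [hcalc]
    have hmeasint : Measurable fun x => μ.condKernel x (Prod.mk x ⁻¹' s) :=
      Kernel.measurable_kernel_prodMk_left hs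
    have hstep : ∫⁻ x, fb x * (μ.condKernel x) (Prod.mk x ⁻¹' s) ∂κ.fst
        = ∫⁻ x, (μ.condKernel x) (Prod.mk x ⁻¹' s) ∂(κ.fst.withDensity fb) := by
      rw [lintegral_withDensity_eq_lintegral_mul _ hfbmeas hmeasint]
      rfl
    rw [hstep, withDensity_congr_ae hfb_ae, hwdf]
    rw [lintegral_smul_measure]
    have : ∫⁻ x, μ.condKernel x (Prod.mk x ⁻¹' s) ∂μ.fst = (μ.fst ⊗ₘ μ.condKernel) s :=
      (Measure.compProd_apply hs).symm
    rw [this, μ.disintegrate μ.condKernel]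
    simp [Measure.smul_apply, ENNReal.smul_def]
  have hcomp₂ : κ.fst ⊗ₘ η₂ = c₂ • ν := by
    ext s hs
    rw [Measure.compProd_apply hs]
    have hcalc : ∀ x, η₂ x (Prod.mk x ⁻¹' s) = gb x * ν.condKernel x (Prod.mk x ⁻¹' s) := by
      intro x; rw [hη₂x x]; simp [Measure.smul_apply, ENNReal.smul_def]
    simp_rw [hcalc]
    have hmeasint : Measurable fun x => ν.condKernel x (Prod.mk x ⁻¹' s) :=
      Kernel.measurable_kernel_prodMk_left hs
    have hstep : ∫⁻ x, gb x * (ν.condKernel x) (Prod.mk x ⁻¹' s) ∂κ.fst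
        = ∫⁻ x, (ν.condKernel x) (Prod.mk x ⁻¹' s) ∂(κ.fst.withDensity gb) := by
      rw [lintegral_withDensity_eq_lintegral_mul _ hgbmeas hmeasint]
      rfl
    rw [hstep, withDensity_congr_ae hgb_ae, hwdg]
    rw [lintegral_smul_measure]
    have : ∫⁻ x, ν.condKernel x (Prod.mk x ⁻¹' s) ∂ν.fst = (ν.fst ⊗ₘ ν.condKernel) s :=
      (Measure.compProd_apply hs).symm
    rw [this, ν.disintegrate ν.condKernel]
    simp [Measure.smul_apply, ENNReal.smul_def]
  have hcomp : κ = κ.fst ⊗ₘ η := by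
    rw [hη, Measure.compProd_add_right, hcomp₁, hcomp₂, hκeq]
  -- a.e. identification of the conditional kernel
  have hcond : ∀ᵐ x ∂κ.fst, η x = κ.condKernel x :=
    eq_condKernel_of_measure_eq_compProd η hcomp
  -- integrability of the identity under the conditional kernel
  have hidμ : Integrable (fun p : E × Ω => p.2) μ :=
    (integrable_norm_iff measurable_snd.aestronglyMeasurable).mp hμint
  have hidν : Integrable (fun p : E × Ω => p.2) ν :=
    (integrable_norm_iff measurable_snd.aestronglyMeasurable).mp hνint
  have hidκ : Integrable (fun p : E × Ω => p.2) κ := by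
    rw [hκeq]
    exact (hidμ.smul_measure hc₁top).add_measure (hidν.smul_measure hc₂top)
  have hint_ae : ∀ᵐ x ∂κ.fst, Integrable (fun y : Ω => y) (κ.condKernel x) :=
    hidκ.condKernel_ae
  -- rnDeriv finiteness
  have hrn_lt_top : ∀ᵐ x ∂κ.fst, ν.fst.rnDeriv κ.fst x < ∞ :=
    Measure.rnDeriv_lt_top _ _
  -- conclusion
  filter_upwards [hcond, hint_ae, hae_sum, hfb_ae, hgb_ae, hrn_lt_top] with x hx hint hsum hfbx
    hgbx hlt
  have hηx : η x = fb x • μ.condKernel x + gb x • ν.condKernel x := by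
    rw [hη, Kernel.add_apply, hη₁x x, hη₂x x]
  rw [← hx, hηx] at hint ⊢
  have hint₁ : Integrable (fun y : Ω => y) (fb x • μ.condKernel x) :=
    (integrable_add_measure.mp hint).1
  have hint₂ : Integrable (fun y : Ω => y) (gb x • ν.condKernel x) :=
    (integrable_add_measure.mp hint).2
  rw [integral_add_measure hint₁ hint₂, integral_smul_measure, integral_smul_measure]
  -- compute the real coefficients
  have hgtop : g x ≠ ∞ := by
    simp only [hg]
    exact ENNReal.mul_ne_top hc₂top hlt.ne
  have hftop : f x ≠ ∞ := by
    intro h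
    rw [h] at hsum
    simp at hsum
  have hg_toReal : (g x).toReal = a * (ν.fst.rnDeriv κ.fst x).toReal := by
    rw [hg]
    simp only []
    rw [ENNReal.toReal_mul, hc₂toReal]
  have hf_toReal : (f x).toReal = 1 - a * (ν.fst.rnDeriv κ.fst x).toReal := by
    have := congrArg ENNReal.toReal hsum
    rw [ENNReal.toReal_add hftop hgtop, ENNReal.toReal_one] at this
    rw [← hg_toReal]
    linarith
  rw [hfbx, hgbx, hf_toReal, hg_toReal]
end
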